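/- Let γ ≥ 1 and let K be a compact subset of a real Banach space X contained in a ball of radius R, and suppose δ*_{m,γ}(K)_X → 0 as m → ∞. Define φ(t) := min{m ≥ 0 : δ*_{m,γ}(K)_X ≤ t} for t > 0. Given ε > 0, let L be the smallest positive integer with 2^L ε ≥ R. Then K can be covered by N(ε) balls of radius ε, where N(ε) ≤ (1+16γ²)^{Σ_{k=1}^{L} φ(2^k ε/8)}. -/

import Mathlib

open Metric

def IsNorm {n : ℕ} (nrm : (Fin n → ℝ) → ℝ) : Prop :=
  (∀ x, 0 ≤ nrm x) ∧
  (∀ x, nrm x = 0 → x = 0) ∧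
  (∀ (c : ℝ) (x), nrm (c • x) = |c| * nrm x) ∧
  (∀ x y, nrm (x + y) ≤ nrm x + nrm y)

noncomputable def stableWidth (X : Type*) [NormedAddCommGroup X]
    (K : Set X) (n : ℕ) (γ : ℝ) : ℝ :=
  sInf { d | ∃ (nrm : (Fin n → ℝ) → ℝ) (a : X → Fin n → ℝ) (M : (Fin n → ℝ) → X),
    IsNorm nrm ∧
    (∀ f ∈ K, ∀ g ∈ K, nrm (a f - a g) ≤ γ * ‖f - g‖) ∧
    (∀ x y, ‖M x - M y‖ ≤ γ * nrm (x - y)) ∧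
    d = ⨆ f : K, ‖(f : X) - M (a (f : X))‖ }

noncomputable def modStableWidth (X : Type*) [NormedAddCommGroup X]
    (K : Set X) (n : ℕ) (γ : ℝ) : ℝ :=
  sInf { d | ∃ (nrm : (Fin n → ℝ) → ℝ) (a : X → Fin n → ℝ) (M : (Fin n → ℝ) → X),
    IsNorm nrm ∧
    (∀ f g : X, nrm (a f - a g) ≤ γ * ‖f - g‖) ∧
    (∀ x y, ‖M x - M y‖ ≤ γ * nrm (x - y)) ∧
    d = ⨆ f : K, ‖(f : X) - M (a (f : X))‖ }

noncomputable def entropyNumber (X : Type*) [NormedAddCommGroup X] (K : Set X) (n : ℕ) : ℝ :=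
  sInf { ε : ℝ | 0 < ε ∧ ∃ T : Finset X, T.card ≤ 2 ^ n ∧ K ⊆ ⋃ c ∈ T, closedBall c ε }


open MeasureTheory Pointwise

namespace Stmt6Aux

variable {n : ℕ} {nrm : (Fin n → ℝ) → ℝ}

lemma nrm_zero (h : IsNorm nrm) : nrm 0 = 0 := by
  have := h.2.2.1 0 0; simpa using this

lemma nrm_neg (h : IsNorm nrm) (x : Fin n → ℝ) : nrm (-x) = nrm x := by
  have := h.2.2.1 (-1) x; simpa using this

lemma nrm_sub_rev (h : IsNorm nrm) (x y : Fin n → ℝ) : nrm (x - y) = nrm (y - x) := by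
  rw [← nrm_neg h (y - x), neg_sub]

lemma nrm_tri (h : IsNorm nrm) (x y z : Fin n → ℝ) :
    nrm (x - z) ≤ nrm (x - y) + nrm (y - z) := by
  have := h.2.2.2 (x - y) (y - z); simpa using this

lemma nrm_sum_le (h : IsNorm nrm) {ι : Type*} (s : Finset ι) (f : ι → (Fin n → ℝ)) :
    nrm (∑ i ∈ s, f i) ≤ ∑ i ∈ s, nrm (f i) := by
  classical
  induction s using Finset.induction with
  | empty => simp [nrm_zero h]
  | insert _ _ hx ih =>
      rw [Finset.sum_insert hx, Finset.sum_insert hx]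
      exact le_trans (h.2.2.2 _ _) (by linarith)

lemma nrm_le_const (h : IsNorm nrm) :
    ∃ C : ℝ, 0 ≤ C ∧ ∀ x, nrm x ≤ C * ‖x‖ := by
  classical
  set e : Fin n → (Fin n → ℝ) := fun i => fun j => if i = j then (1:ℝ) else 0 with he
  refine ⟨∑ i : Fin n, nrm (e i), Finset.sum_nonneg fun i _ => h.1 _, fun x => ?_⟩
  have hx : x = ∑ i : Fin n, x i • e i := pi_eq_sum_univ x
  calc nrm x ≤ ∑ i : Fin n, nrm (x i • e i) := by
        conv_lhs => rw [hx]
        exact nrm_sum_le h _ _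
    _ ≤ ∑ i : Fin n, nrm (e i) * ‖x‖ := by
        refine Finset.sum_le_sum fun i _ => ?_
        rw [h.2.2.1]
        calc |x i| * nrm (e i) ≤ ‖x‖ * nrm (e i) := by
              refine mul_le_mul_of_nonneg_right ?_ (h.1 _)
              simpa [Real.norm_eq_abs] using norm_le_pi_norm x i
          _ = nrm (e i) * ‖x‖ := mul_comm _ _
    _ = (∑ i : Fin n, nrm (e i)) * ‖x‖ := by rw [Finset.sum_mul]

lemma nrm_continuous (h : IsNorm nrm) : Continuous nrm := by
  obtain ⟨C, hC0, hC⟩ := nrm_le_const h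
  refine (LipschitzWith.of_dist_le_mul (K := C.toNNReal) fun x y => ?_).continuous
  rw [Real.dist_eq, dist_eq_norm]
  have h1 : nrm x - nrm y ≤ nrm (x - y) := by
    have := h.2.2.2 (x - y) y; simp at this; linarith
  have h2 : nrm y - nrm x ≤ nrm (x - y) := by
    have := h.2.2.2 (y - x) x; simp at this
    have := nrm_sub_rev h x y; linarith
  have := hC (x - y)
  rw [abs_sub_le_iff]
  constructor <;> [skip; skip] <;>
    · refine le_trans (by linarith) (le_trans this ?_)
      simp [Real.coe_toNNReal C hC0]

lemma nrm_lower (h : IsNorm nrm) : ∃ c : ℝ, 0 < c ∧ ∀ x, c * ‖x‖ ≤ nrm x := by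
  rcases Nat.eq_zero_or_pos n with h0 | hpos
  · refine ⟨1, one_pos, fun x => ?_⟩
    subst h0
    have hx0 : x = 0 := Subsingleton.elim x 0
    rw [hx0, nrm_zero h, norm_zero, mul_zero]
  · haveI : Nonempty (Fin n) := ⟨⟨0, hpos⟩⟩
    have hS : IsCompact (sphere (0 : Fin n → ℝ) 1) := isCompact_sphere _ _
    have hSne : (sphere (0 : Fin n → ℝ) 1).Nonempty :=
      NormedSpace.sphere_nonempty.2 zero_le_one
    obtain ⟨x₀, hx₀S, hmin⟩ := hS.exists_isMinOn hSne (nrm_continuous h).continuousOn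
    have hx₀norm : ‖x₀‖ = 1 := by simpa using hx₀S
    have hc : 0 < nrm x₀ := by
      rcases lt_or_eq_of_le (h.1 x₀) with hlt | heq
      · exact hlt
      · exfalso
        have : x₀ = 0 := h.2.1 x₀ heq.symm
        rw [this] at hx₀norm; simp at hx₀norm
    refine ⟨nrm x₀, hc, fun x => ?_⟩
    rcases eq_or_ne x 0 with rfl | hx
    · simp [nrm_zero h]
    · have hxn : (0:ℝ) < ‖x‖ := norm_pos_iff.2 hx
      have hmem : ‖x‖⁻¹ • x ∈ sphere (0 : Fin n → ℝ) 1 := by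
        simp [norm_smul, abs_of_pos (inv_pos.2 hxn), inv_mul_cancel₀ hxn.ne']
      have hge : nrm x₀ ≤ nrm (‖x‖⁻¹ • x) := hmin hmem
      have hval : nrm (‖x‖⁻¹ • x) = ‖x‖⁻¹ * nrm x := by
        rw [h.2.2.1]; rw [abs_of_pos (inv_pos.2 hxn)]
      rw [hval] at hge
      calc nrm x₀ * ‖x‖ ≤ (‖x‖⁻¹ * nrm x) * ‖x‖ :=
        mul_le_mul_of_nonneg_right hge hxn.le
        _ = nrm x := by field_simp


lemma packing (h : IsNorm nrm) {s ρ : ℝ} (hs : 0 < s) (hρ : 0 ≤ ρ)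
    (F : Finset (Fin n → ℝ)) (z : Fin n → ℝ)
    (hFz : ∀ x ∈ F, nrm (x - z) ≤ ρ)
    (hsep : ∀ x ∈ F, ∀ y ∈ F, x ≠ y → s ≤ nrm (x - y)) :
    (F.card : ℝ) ≤ ((2 * ρ + s) / s) ^ n := by
  classical
  set B1 : Set (Fin n → ℝ) := {y | nrm y < 1} with hB1
  have hcont := nrm_continuous h
  have hBopen : ∀ x : Fin n → ℝ, ∀ u : ℝ, IsOpen {y | nrm (y - x) < u} :=
    fun x u => isOpen_Iio.preimage (hcont.comp (continuous_id.sub continuous_const))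
  have hB1open : IsOpen B1 := by
    have := hBopen 0 1; simpa [hB1] using this
  have hscale : ∀ u : ℝ, 0 < u → ∀ x : Fin n → ℝ,
      {y | nrm (y - x) < u} = x +ᵥ u • B1 := by
    intro u hu x
    ext y
    simp only [Set.mem_setOf_eq, Set.mem_vadd_set_iff_neg_vadd_mem, vadd_eq_add,
      Set.mem_smul_set_iff_inv_smul_mem₀ hu.ne', hB1, Set.mem_setOf_eq]
    rw [h.2.2.1, abs_of_pos (inv_pos.2 hu)]
    rw [show -x + y = y - x by ring]
    rw [inv_mul_lt_iff₀ hu, mul_one]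
  have hvol : ∀ u : ℝ, 0 < u → ∀ x : Fin n → ℝ,
      volume {y | nrm (y - x) < u} = ENNReal.ofReal (u ^ n) * volume B1 := by
    intro u hu x
    rw [hscale u hu x, measure_vadd (μ := volume), Measure.addHaar_smul,
      Module.finrank_fin_fun, abs_pow, abs_of_pos hu]
  have hB1pos : 0 < volume B1 := by
    refine hB1open.measure_pos volume ⟨0, ?_⟩
    simp [hB1, nrm_zero h]
  have hB1fin : volume B1 < ⊤ := by
    obtain ⟨c, hc, hcl⟩ := nrm_lower h
    have hsub : B1 ⊆ Metric.ball (0 : Fin n → ℝ) (1 / c) := by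
      intro y hy
      rw [Metric.mem_ball, dist_zero_right]
      have h1 : c * ‖y‖ ≤ nrm y := hcl y
      have h2 : nrm y < 1 := hy
      rw [lt_div_iff₀ hc]; linarith [mul_comm c ‖y‖]
    exact lt_of_le_of_lt (measure_mono hsub) measure_ball_lt_top
  -- disjointness of small balls
  have hdisj : (↑F : Set (Fin n → ℝ)).PairwiseDisjoint
      (fun x => {y | nrm (y - x) < s / 2}) := by
    intro x hx y hy hxy
    simp only [Function.onFun]
    rw [Set.disjoint_left]
    intro v hv1 hv2
    have h1 : nrm (v - x) < s / 2 := hv1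
    have h2 : nrm (v - y) < s / 2 := hv2
    have h3 : s ≤ nrm (x - y) := hsep x hx y hy hxy
    have h4 : nrm (x - y) ≤ nrm (x - v) + nrm (v - y) := nrm_tri h x v y
    rw [nrm_sub_rev h x v] at h4
    linarith
  have hsub : ∀ x ∈ F, {y | nrm (y - x) < s / 2} ⊆ {y | nrm (y - z) < ρ + s / 2} := by
    intro x hx y hy
    have h1 : nrm (y - x) < s / 2 := hy
    have h2 : nrm (x - z) ≤ ρ := hFz x hx
    have h3 : nrm (y - z) ≤ nrm (y - x) + nrm (x - z) := nrm_tri h y x z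
    show nrm (y - z) < ρ + s / 2
    linarith
  have hmeas : volume (⋃ x ∈ F, {y | nrm (y - x) < s / 2})
      = ∑ x ∈ F, volume {y | nrm (y - x) < s / 2} :=
    measure_biUnion_finset hdisj (fun x _ => (hBopen x (s / 2)).measurableSet)
  have hle : ∑ x ∈ F, volume {y | nrm (y - x) < s / 2}
      ≤ ENNReal.ofReal ((ρ + s / 2) ^ n) * volume B1 := by
    rw [← hmeas, ← hvol (ρ + s / 2) (by linarith) z]
    exact measure_mono (Set.iUnion₂_subset hsub)
  have hsum : ∑ x ∈ F, volume {y | nrm (y - x) < s / 2}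
      = (F.card : ENNReal) * (ENNReal.ofReal ((s / 2) ^ n) * volume B1) := by
    rw [Finset.sum_congr rfl (fun x hx => hvol (s / 2) (by linarith) x)]
    rw [Finset.sum_const, nsmul_eq_mul]
  rw [hsum] at hle
  rw [← mul_assoc] at hle
  have hle2 : (F.card : ENNReal) * ENNReal.ofReal ((s / 2) ^ n)
      ≤ ENNReal.ofReal ((ρ + s / 2) ^ n) :=
    (ENNReal.mul_le_mul_iff_left hB1pos.ne' hB1fin.ne).1 hle
  have hcast : (F.card : ENNReal) = ENNReal.ofReal (F.card : ℝ) := by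
    rw [ENNReal.ofReal_natCast]
  rw [hcast, ← ENNReal.ofReal_mul (by positivity)] at hle2
  have hle3 : (F.card : ℝ) * (s / 2) ^ n ≤ (ρ + s / 2) ^ n :=
    (ENNReal.ofReal_le_ofReal_iff (by positivity)).1 hle2
  have hpow : (0:ℝ) < (s / 2) ^ n := by positivity
  rw [show ((2 * ρ + s) / s : ℝ) = (ρ + s / 2) / (s / 2) by field_simp, div_pow,
    le_div_iff₀ hpow]
  exact hle3

lemma net (h : IsNorm nrm) {s ρ : ℝ} (hs : 0 < s) (hρ : 0 ≤ ρ)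
    (A : Set (Fin n → ℝ)) (z : Fin n → ℝ) (hA : ∀ y ∈ A, nrm (y - z) ≤ ρ) :
    ∃ F : Finset (Fin n → ℝ), ↑F ⊆ A ∧ (F.card : ℝ) ≤ ((2 * ρ + s) / s) ^ n ∧
      ∀ y ∈ A, ∃ x ∈ F, nrm (y - x) ≤ s := by
  classical
  set P : Finset (Fin n → ℝ) → Prop := fun F => ↑F ⊆ A ∧
    ∀ x ∈ F, ∀ y ∈ F, x ≠ y → s ≤ nrm (x - y) with hP
  have hcard : ∀ F, P F → (F.card : ℝ) ≤ ((2 * ρ + s) / s) ^ n := by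
    intro F hF
    exact packing h hs hρ F z (fun x hx => hA x (hF.1 hx)) hF.2
  have hcardN : ∀ F, P F → F.card ≤ ⌊((2 * ρ + s) / s) ^ n⌋₊ := by
    intro F hF
    exact Nat.le_floor (hcard F hF)
  set C : Set ℕ := {m | ∃ F : Finset (Fin n → ℝ), P F ∧ F.card = m} with hC
  have hCne : C.Nonempty := ⟨0, ∅, ⟨by simp, by simp⟩, rfl⟩
  have hCbdd : BddAbove C := by
    refine ⟨⌊((2 * ρ + s) / s) ^ n⌋₊, fun m hm => ?_⟩
    obtain ⟨F, hF, rfl⟩ := hm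
    exact hcardN F hF
  obtain ⟨F, hF, hFcard⟩ := Nat.sSup_mem hCne hCbdd
  refine ⟨F, hF.1, hcard F hF, ?_⟩
  intro y hy
  by_contra hno
  push_neg at hno
  have hyF : y ∉ F := by
    intro hyF
    have := hno y hyF
    simp [sub_self, nrm_zero h] at this
    linarith
  have hP' : P (insert y F) := by
    constructor
    · intro x hx
      rcases Finset.mem_insert.1 hx with rfl | hx
      · exact hy
      · exact hF.1 hx
    · intro v hv w hw hne
      rcases Finset.mem_insert.1 hv with hv1 | hv2
      · rcases Finset.mem_insert.1 hw with hw1 | hw2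
        · exact absurd (hv1.trans hw1.symm) hne
        · rw [hv1]; exact le_of_lt (hno w hw2)
      · rcases Finset.mem_insert.1 hw with hw1 | hw2
        · rw [hw1, nrm_sub_rev h]; exact le_of_lt (hno v hv2)
        · exact hF.2 v hv2 w hw2 hne
  have hmem : (insert y F).card ∈ C := ⟨insert y F, hP', rfl⟩
  have hle := le_csSup hCbdd hmem
  rw [Finset.card_insert_of_notMem hyF, hFcard] at hle
  omega

lemma isNorm_sum_abs : IsNorm (fun x : Fin n → ℝ => ∑ i, |x i|) := by
  refine ⟨fun x => Finset.sum_nonneg fun i _ => abs_nonneg _, ?_, ?_, ?_⟩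
  · intro x hx
    funext i
    have := (Finset.sum_eq_zero_iff_of_nonneg (fun j _ => abs_nonneg (x j))).1 hx i
      (Finset.mem_univ i)
    simpa [abs_eq_zero] using this
  · intro c x
    simp only [Pi.smul_apply, smul_eq_mul, abs_mul, ← Finset.mul_sum]
  · intro x y
    rw [← Finset.sum_add_distrib]
    exact Finset.sum_le_sum fun i _ => abs_add_le _ _

lemma exists_triple {X : Type*} [NormedAddCommGroup X] {K : Set X} (hK : IsCompact K)
    (hKne : K.Nonempty) {γ : ℝ} (hγ : 1 ≤ γ) (n : ℕ) {b : ℝ}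
    (hb : stableWidth X K n γ < b) :
    ∃ (nrm : (Fin n → ℝ) → ℝ) (a : X → Fin n → ℝ) (M : (Fin n → ℝ) → X),
      IsNorm nrm ∧ (∀ f ∈ K, ∀ g ∈ K, nrm (a f - a g) ≤ γ * ‖f - g‖) ∧
      (∀ x y, ‖M x - M y‖ ≤ γ * nrm (x - y)) ∧ ∀ f ∈ K, ‖f - M (a f)‖ ≤ b := by
  classical
  have hγ0 : (0:ℝ) < γ := by linarith
  set D := { d | ∃ (nrm : (Fin n → ℝ) → ℝ) (a : X → Fin n → ℝ) (M : (Fin n → ℝ) → X),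
    IsNorm nrm ∧
    (∀ f ∈ K, ∀ g ∈ K, nrm (a f - a g) ≤ γ * ‖f - g‖) ∧
    (∀ x y, ‖M x - M y‖ ≤ γ * nrm (x - y)) ∧
    d = ⨆ f : K, ‖(f : X) - M (a (f : X))‖ } with hD
  have hne : D.Nonempty := by
    refine ⟨_, fun x : Fin n → ℝ => ∑ i, |x i|, fun _ => 0, fun _ => 0, isNorm_sum_abs,
      ?_, ?_, rfl⟩
    · intro f _ g _
      simp only [sub_zero, sub_self]
      have : (∑ i, |(0 : Fin n → ℝ) i|) = 0 := by simp
      rw [this]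
      positivity
    · intro x y
      simp only [sub_self, norm_zero]
      have : (0:ℝ) ≤ ∑ i, |(x - y) i| := Finset.sum_nonneg fun i _ => abs_nonneg _
      positivity
  have hbdd : BddBelow D := by
    refine ⟨0, fun d hd => ?_⟩
    obtain ⟨nrm, a, M, _, _, _, rfl⟩ := hd
    exact Real.iSup_nonneg fun f => norm_nonneg _
  have hb' : sInf D < b := hb
  obtain ⟨d, hd, hdb⟩ := (csInf_lt_iff hbdd hne).1 hb'
  obtain ⟨nrm, a, M, h1, h2, h3, rfl⟩ := hd
  refine ⟨nrm, a, M, h1, h2, h3, ?_⟩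
  intro f hf
  obtain ⟨f₀, hf₀⟩ := hKne
  obtain ⟨C, hC⟩ := Metric.isBounded_iff.1 hK.isBounded
  have hbddA : BddAbove (Set.range fun f : K => ‖(f : X) - M (a (f : X))‖) := by
    refine ⟨‖(f₀ : X) - M (a f₀)‖ + C + γ * (γ * C), ?_⟩
    rintro _ ⟨g, rfl⟩
    have e1 : ‖(g : X) - f₀‖ ≤ C := by
      rw [← dist_eq_norm]; exact hC g.2 hf₀
    have e1' : ‖f₀ - (g : X)‖ ≤ C := by
      rw [← dist_eq_norm]; exact hC hf₀ g.2
    have e2 : nrm (a f₀ - a (g : X)) ≤ γ * C :=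
      le_trans (h2 f₀ hf₀ g g.2) (mul_le_mul_of_nonneg_left e1' hγ0.le)
    have e3 : ‖M (a f₀) - M (a (g : X))‖ ≤ γ * (γ * C) :=
      le_trans (h3 _ _) (mul_le_mul_of_nonneg_left e2 hγ0.le)
    have hsplit : (g : X) - M (a (g : X)) =
        ((g : X) - f₀) + (f₀ - M (a f₀)) + (M (a f₀) - M (a (g : X))) := by abel
    calc ‖(g : X) - M (a (g : X))‖
        ≤ ‖(g : X) - f₀‖ + ‖f₀ - M (a f₀)‖ + ‖M (a f₀) - M (a (g : X))‖ := by
          rw [hsplit]; exact norm_add₃_le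
      _ ≤ ‖(f₀ : X) - M (a f₀)‖ + C + γ * (γ * C) := by linarith
  exact le_trans (le_ciSup hbddA ⟨f, hf⟩) hdb.le

lemma refine_step {X : Type*} [NormedAddCommGroup X] {γ : ℝ} (hγ : 1 ≤ γ) {K : Set X}
    (hK : IsCompact K) {n : ℕ} {r : ℝ} (hr : 0 < r)
    (hw : stableWidth X K n γ ≤ r / 8) {η : ℝ} (hη : 0 < η) (c : X) :
    ∃ T : Finset X, (T.card : ℝ) ≤ (1 + 16 * γ ^ 2 + η) ^ n ∧
      K ∩ closedBall c r ⊆ ⋃ x ∈ T, closedBall x (r / 2) := by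
  classical
  have hγ0 : (0:ℝ) < γ := by linarith
  set S := K ∩ closedBall c r with hS
  rcases S.eq_empty_or_nonempty with hSe | ⟨f₀, hf₀⟩
  · refine ⟨∅, ?_, ?_⟩
    · simp only [Finset.card_empty, Nat.cast_zero]; positivity
    · rw [hSe]; exact Set.empty_subset _
  · have hf₀K : f₀ ∈ K := hf₀.1
    have hden : (0:ℝ) < 16 * γ ^ 2 + η := by positivity
    set η' := η * r / (8 * (16 * γ ^ 2 + η)) with hη'
    have hη'pos : 0 < η' := by positivity
    obtain ⟨nrm, a, M, h1, h2, h3, herr⟩ := exists_triple hK ⟨f₀, hf₀K⟩ hγ n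
      (b := r / 8 + η') (lt_of_le_of_lt hw (by linarith))
    set s := 4 * γ * r / (16 * γ ^ 2 + η) with hs
    have hspos : 0 < s := by positivity
    set ρ := 2 * γ * r with hρdef
    have hρ : (0:ℝ) ≤ ρ := by positivity
    have hA : ∀ y ∈ a '' S, nrm (y - a f₀) ≤ ρ := by
      rintro y ⟨f, hfS, rfl⟩
      refine le_trans (h2 f hfS.1 f₀ hf₀.1) ?_
      have hd : ‖f - f₀‖ ≤ 2 * r := by
        have d1 : dist f c ≤ r := hfS.2
        have d2 : dist f₀ c ≤ r := hf₀.2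
        have d3 := dist_triangle f c f₀
        have d4 : dist c f₀ = dist f₀ c := dist_comm c f₀
        rw [← dist_eq_norm]
        linarith
      calc γ * ‖f - f₀‖ ≤ γ * (2 * r) := mul_le_mul_of_nonneg_left hd hγ0.le
        _ = ρ := by rw [hρdef]; ring
    obtain ⟨F, hFsub, hFcard, hFnet⟩ := net h1 hspos hρ (a '' S) (a f₀) hA
    have key2 : (2 * ρ + s) / s = 1 + 16 * γ ^ 2 + η := by
      rw [hρdef, hs]; field_simp; ring
    set pick : (Fin n → ℝ) → X := fun x =>
      if hx : ∃ f ∈ S, a f = x then hx.choose else f₀ with hpick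
    have hpickS : ∀ x ∈ F, pick x ∈ S ∧ a (pick x) = x := by
      intro x hxF
      have hex : ∃ f ∈ S, a f = x := by
        obtain ⟨f, hfS, hfa⟩ := hFsub (Finset.mem_coe.2 hxF)
        exact ⟨f, hfS, hfa⟩
      have hpx : pick x = hex.choose := by rw [hpick]; exact dif_pos hex
      obtain ⟨hc1, hc2⟩ := hex.choose_spec
      rw [hpx]
      exact ⟨hc1, hc2⟩
    refine ⟨F.image pick, ?_, ?_⟩
    · calc ((F.image pick).card : ℝ) ≤ (F.card : ℝ) :=
            Nat.cast_le.2 Finset.card_image_le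
        _ ≤ ((2 * ρ + s) / s) ^ n := hFcard
        _ = (1 + 16 * γ ^ 2 + η) ^ n := by rw [key2]
    · intro f hfS
      obtain ⟨x, hxF, hxnear⟩ := hFnet (a f) ⟨f, hfS, rfl⟩
      obtain ⟨hpS, hpa⟩ := hpickS x hxF
      have e1 : ‖f - M (a f)‖ ≤ r / 8 + η' := herr f hfS.1
      have e2 : ‖pick x - M (a (pick x))‖ ≤ r / 8 + η' := herr _ hpS.1
      have e2' : ‖M (a (pick x)) - pick x‖ ≤ r / 8 + η' := by
        rw [norm_sub_rev]; exact e2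
      have e3 : ‖M (a f) - M (a (pick x))‖ ≤ γ * s := by
        rw [hpa]
        exact le_trans (h3 _ _) (mul_le_mul_of_nonneg_left hxnear hγ0.le)
      have key1 : γ * s + 2 * (r / 8 + η') = r / 2 := by
        rw [hs, hη']; field_simp; ring
      have hnear : ‖f - pick x‖ ≤ r / 2 := by
        have hsplit : f - pick x =
            (f - M (a f)) + (M (a f) - M (a (pick x))) + (M (a (pick x)) - pick x) := by
          abel
        calc ‖f - pick x‖
            ≤ ‖f - M (a f)‖ + ‖M (a f) - M (a (pick x))‖ + ‖M (a (pick x)) - pick x‖ := by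
              rw [hsplit]; exact norm_add₃_le
          _ ≤ r / 2 := by linarith
      refine Set.mem_iUnion₂.2 ⟨pick x, Finset.mem_image_of_mem pick hxF, ?_⟩
      rw [Metric.mem_closedBall, dist_eq_norm]
      exact hnear

end Stmt6Aux

open Stmt6Aux in
/-- Covering bound for K in terms of the function φ(t) = min{m : δ*_{m,γ}(K)_X ≤ t}:
with L the smallest positive integer such that 2^L ε ≥ R, the set K can be covered by
(1+16γ²)^{Σ_{k=1}^L φ(2^k ε/8)} balls of radius ε. -/
theorem stmt6 {X : Type*} [NormedAddCommGroup X]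
    (γ : ℝ) (hγ : 1 ≤ γ) (K : Set X) (hK : IsCompact K)
    (R : ℝ) (x₀ : X) (hKR : K ⊆ closedBall x₀ R)
    (hlim : Filter.Tendsto (fun m => stableWidth X K m γ) Filter.atTop (nhds 0))
    (φ : ℝ → ℕ) (hφ : ∀ t : ℝ, 0 < t → φ t = sInf {m : ℕ | stableWidth X K m γ ≤ t})
    (ε : ℝ) (hε : 0 < ε)
    (L : ℕ) (hL1 : 1 ≤ L) (hLge : R ≤ 2 ^ L * ε)
    (hLmin : ∀ L' : ℕ, 1 ≤ L' → R ≤ 2 ^ L' * ε → L ≤ L') :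
    ∃ T : Finset X,
      (T.card : ℝ) ≤ (1 + 16 * γ ^ 2) ^ (∑ k ∈ Finset.Icc 1 L, φ (2 ^ k * ε / 8)) ∧
      K ⊆ ⋃ c ∈ T, closedBall c ε := by
  classical
  have hphi : ∀ t : ℝ, 0 < t → stableWidth X K (φ t) γ ≤ t := by
    intro t ht
    have hExists : ∃ m : ℕ, stableWidth X K m γ ≤ t := by
      have := (hlim.eventually_lt_const ht).exists
      obtain ⟨m, hm⟩ := this
      exact ⟨m, hm.le⟩
    rw [hφ t ht]
    exact Nat.sInf_mem hExists
  -- main induction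
  have main : ∀ η : ℝ, 0 < η → ∀ i : ℕ, i ≤ L → ∃ T : Finset X,
      (T.card : ℝ) ≤ (1 + 16 * γ ^ 2 + η) ^
        (∑ j ∈ Finset.Icc (L - i + 1) L, φ (2 ^ j * ε / 8)) ∧
      K ⊆ ⋃ c ∈ T, closedBall c (2 ^ (L - i) * ε) := by
    intro η hη i
    induction i with
    | zero =>
        intro _
        refine ⟨{x₀}, ?_, ?_⟩
        · rw [Finset.card_singleton]
          have hIcc : Finset.Icc (L - 0 + 1) L = ∅ :=
            Finset.Icc_eq_empty (by omega)
          rw [hIcc, Finset.sum_empty, pow_zero, Nat.cast_one]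
        · intro f hf
          refine Set.mem_iUnion₂.2 ⟨x₀, Finset.mem_singleton_self x₀, ?_⟩
          refine closedBall_subset_closedBall ?_ (hKR hf)
          simpa using hLge
    | succ i ih =>
        intro hi1
        obtain ⟨T, hTcard, hTcov⟩ := ih (by omega)
        set k := L - i with hk
        have hk1 : 1 ≤ k := by omega
        have hkL : k ≤ L := by omega
        set r := (2:ℝ) ^ k * ε with hrdef
        have hr : 0 < r := by positivity
        have hw : stableWidth X K (φ (r / 8)) γ ≤ r / 8 := hphi (r / 8) (by positivity)
        have H : ∀ c : X, ∃ Tc : Finset X,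
            (Tc.card : ℝ) ≤ (1 + 16 * γ ^ 2 + η) ^ (φ (r / 8)) ∧
            K ∩ closedBall c r ⊆ ⋃ x ∈ Tc, closedBall x (r / 2) :=
          fun c => refine_step hγ hK hr hw hη c
        choose Tc hTc1 hTc2 using H
        refine ⟨T.biUnion Tc, ?_, ?_⟩
        · have hcard1 : ((T.biUnion Tc).card : ℝ) ≤ ∑ c ∈ T, ((Tc c).card : ℝ) := by
            have := Finset.card_biUnion_le (s := T) (t := Tc)
            calc ((T.biUnion Tc).card : ℝ) ≤ ((∑ c ∈ T, (Tc c).card : ℕ) : ℝ) :=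
                  Nat.cast_le.2 this
              _ = ∑ c ∈ T, ((Tc c).card : ℝ) := by push_cast; ring
          have hcard2 : ∑ c ∈ T, ((Tc c).card : ℝ)
              ≤ (T.card : ℝ) * (1 + 16 * γ ^ 2 + η) ^ (φ (r / 8)) := by
            calc ∑ c ∈ T, ((Tc c).card : ℝ)
                ≤ ∑ _c ∈ T, (1 + 16 * γ ^ 2 + η) ^ (φ (r / 8)) :=
                  Finset.sum_le_sum fun c _ => hTc1 c
              _ = (T.card : ℝ) * (1 + 16 * γ ^ 2 + η) ^ (φ (r / 8)) := by
                  rw [Finset.sum_const, nsmul_eq_mul]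
          have hbase : (0:ℝ) < 1 + 16 * γ ^ 2 + η := by positivity
          have hsum_split : ∑ j ∈ Finset.Icc (L - (i + 1) + 1) L, φ (2 ^ j * ε / 8)
              = φ (2 ^ k * ε / 8) + ∑ j ∈ Finset.Icc (k + 1) L, φ (2 ^ j * ε / 8) := by
            have h1 : L - (i + 1) + 1 = k := by omega
            rw [h1, ← Finset.Ioc_insert_left hkL,
              Finset.sum_insert Finset.left_notMem_Ioc, Finset.Icc_add_one_left_eq_Ioc]
          have hIH' : (T.card : ℝ)
              ≤ (1 + 16 * γ ^ 2 + η) ^ (∑ j ∈ Finset.Icc (k + 1) L, φ (2 ^ j * ε / 8)) := by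
            have h2 : L - i + 1 = k + 1 := by omega
            first
            | exact hTcard
            | rwa [h2] at hTcard
          calc ((T.biUnion Tc).card : ℝ)
              ≤ (T.card : ℝ) * (1 + 16 * γ ^ 2 + η) ^ (φ (r / 8)) :=
                le_trans hcard1 hcard2
            _ ≤ (1 + 16 * γ ^ 2 + η) ^ (∑ j ∈ Finset.Icc (k + 1) L, φ (2 ^ j * ε / 8))
                * (1 + 16 * γ ^ 2 + η) ^ (φ (r / 8)) := by
                refine mul_le_mul_of_nonneg_right hIH' (by positivity)
            _ = (1 + 16 * γ ^ 2 + η) ^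
                (∑ j ∈ Finset.Icc (L - (i + 1) + 1) L, φ (2 ^ j * ε / 8)) := by
                rw [hsum_split, pow_add, hrdef, mul_comm]
        · intro f hf
          have := hTcov hf
          obtain ⟨c, hcT, hfc⟩ := Set.mem_iUnion₂.1 this
          have hfc' : f ∈ K ∩ closedBall c r := ⟨hf, hfc⟩
          have := hTc2 c hfc'
          obtain ⟨x, hxTc, hfx⟩ := Set.mem_iUnion₂.1 this
          refine Set.mem_iUnion₂.2 ⟨x, Finset.mem_biUnion.2 ⟨c, hcT, hxTc⟩, ?_⟩
          have hrad : r / 2 = 2 ^ (L - (i + 1)) * ε := by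
            have h3 : k = (L - (i + 1)) + 1 := by omega
            rw [hrdef, h3, pow_succ]
            ring
          rwa [hrad] at hfx
  -- conclusion
  set Sig := ∑ k ∈ Finset.Icc 1 L, φ (2 ^ k * ε / 8) with hSig
  set B := (1 + 16 * γ ^ 2) ^ Sig with hB
  have hB0 : (0:ℝ) ≤ B := by positivity
  have hcont : Filter.Tendsto (fun η : ℝ => (1 + 16 * γ ^ 2 + η) ^ Sig)
      (nhdsWithin 0 (Set.Ioi 0)) (nhds B) := by
    have hc : Continuous fun η : ℝ => (1 + 16 * γ ^ 2 + η) ^ Sig := by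
      continuity
    have h7 := (hc.tendsto 0).mono_left (nhdsWithin_le_nhds (s := Set.Ioi (0:ℝ)))
    simpa [hB] using h7
  have hBlt : B < (⌊B⌋₊ : ℝ) + 1 := Nat.lt_floor_add_one B
  obtain ⟨η, hηlt, hη0⟩ :=
    ((hcont.eventually_lt_const hBlt).and eventually_mem_nhdsWithin).exists
  obtain ⟨T, hTcard, hTcov⟩ := main η hη0 L le_rfl
  refine ⟨T, ?_, ?_⟩
  · have h1 : (T.card : ℝ) < (⌊B⌋₊ : ℝ) + 1 := by
      have h2 : ∑ j ∈ Finset.Icc (L - L + 1) L, φ (2 ^ j * ε / 8) = Sig := by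
        have h6 : L - L + 1 = 1 := by omega
        rw [hSig, h6]
      rw [h2] at hTcard
      exact lt_of_le_of_lt hTcard hηlt
    have h3 : T.card < ⌊B⌋₊ + 1 := by exact_mod_cast h1
    have h4 : T.card ≤ ⌊B⌋₊ := by omega
    calc (T.card : ℝ) ≤ (⌊B⌋₊ : ℝ) := Nat.cast_le.2 h4
      _ ≤ B := Nat.floor_le hB0
  · intro f hf
    have := hTcov hf
    have h5 : (2:ℝ) ^ (L - L) * ε = ε := by
      simp
    rwa [h5] at this
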